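/- If U is a bounded subset of the metric space (F_B(ℝ^m)^p, d_p), then for each α > 0 the family of α-cuts {[u]_α : u ∈ U} is uniformly bounded in ℝ^m, i.e., there exists M such that H([u]_α, {0}) ≤ M for all u ∈ U. -/

import Mathlib

open Metric Set MeasureTheory Filter

noncomputable section

/-- `Em m` is the Euclidean space ℝ^m. -/
abbrev Em (m : ℕ) := EuclideanSpace ℝ (Fin m)

/-- A set is star-shaped if it contains a point `x` such that the segment from `x`
to any point of the set lies in the set. -/
def StarShaped {m : ℕ} (K : Set (Em m)) : Prop :=
  ∃ x ∈ K, ∀ y ∈ K, segment ℝ x y ⊆ K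

/-- The kernel of a set: all points seeing the whole set. -/
def kern {m : ℕ} (K : Set (Em m)) : Set (Em m) :=
  {x | x ∈ K ∧ ∀ y ∈ K, segment ℝ x y ⊆ K}

/-- Kuratowski upper limit of a sequence of sets. -/
def KLimsup {m : ℕ} (C : ℕ → Set (Em m)) : Set (Em m) :=
  ⋂ n : ℕ, closure (⋃ k : ℕ, ⋃ _ : n ≤ k, C k)

/-- Kuratowski lower limit of a sequence of sets. -/
def KLiminf {m : ℕ} (C : ℕ → Set (Em m)) : Set (Em m) :=
  {x | ∃ f : ℕ → Em m, (∀ n, f n ∈ C n) ∧ Tendsto f atTop (nhds x)}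

/-- The α-cut of a fuzzy set `u`, for α > 0. -/
def acut {m : ℕ} (u : Em m → ℝ) (a : ℝ) : Set (Em m) := {x | a ≤ u x}

/-- The support (0-cut) of a fuzzy set. -/
def fsupp {m : ℕ} (u : Em m → ℝ) : Set (Em m) := closure {x | 0 < u x}

/-- Membership in `F_B(ℝ^m)^p`: normal, upper semi-continuous fuzzy sets with
compact α-cuts for α ∈ (0,1] and α ↦ H([u]_α, {0})^p integrable on (0,1]. -/
structure IsFuzzyBp {m : ℕ} (p : ℝ) (u : Em m → ℝ) : Prop where
  mem01 : ∀ x, u x ∈ Icc (0:ℝ) 1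
  normal : ∃ x, u x = 1
  usc : UpperSemicontinuous u
  compactCuts : ∀ a ∈ Ioc (0:ℝ) 1, IsCompact (acut u a)
  lp : IntegrableOn (fun a => hausdorffDist (acut u a) ({0} : Set (Em m)) ^ p)
        (Ioc (0:ℝ) 1)

/-- Membership in `F_B(ℝ^m)`: normal, upper semi-continuous fuzzy sets with
bounded (hence compact closed) support. -/
structure IsFuzzyB {m : ℕ} (u : Em m → ℝ) : Prop where
  mem01 : ∀ x, u x ∈ Icc (0:ℝ) 1
  normal : ∃ x, u x = 1
  usc : UpperSemicontinuous u
  bddSupp : Bornology.IsBounded {x | 0 < u x}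

/-- The `d_p` metric on fuzzy sets. -/
def dp {m : ℕ} (p : ℝ) (u v : Em m → ℝ) : ℝ :=
  (∫ a in Ioc (0:ℝ) 1, hausdorffDist (acut u a) (acut v a) ^ p) ^ (1/p)

/-- `d_p` distance to the crisp origin `0̂`. -/
def dpOrigin {m : ℕ} (p : ℝ) (u : Em m → ℝ) : ℝ :=
  (∫ a in Ioc (0:ℝ) 1, hausdorffDist (acut u a) ({0} : Set (Em m)) ^ p) ^ (1/p)

/-- Uniformly p-mean bounded family. -/
def UPMB {m : ℕ} (p : ℝ) (U : Set (Em m → ℝ)) : Prop :=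
  ∃ M : ℝ, ∀ u ∈ U, dpOrigin p u ≤ M

/-- p-mean equi-left-continuous family. -/
def PMELC {m : ℕ} (p : ℝ) (U : Set (Em m → ℝ)) : Prop :=
  ∀ ε > (0:ℝ), ∃ δ > (0:ℝ), ∀ h : ℝ, 0 ≤ h → h < δ → ∀ u ∈ U,
    (∫ a in Ioc h 1, hausdorffDist (acut u a) (acut u (a - h)) ^ p) ^ (1/p) < ε

/-- Truncation `u^{(a)}` of a fuzzy set at level `a`. -/
def ftrunc {m : ℕ} (u : Em m → ℝ) (a : ℝ) : Em m → ℝ :=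
  fun x => if a ≤ u x then u x else 0

/-- The kernel of a fuzzy set: intersection of the kernels of its cuts. -/
def fker {m : ℕ} (u : Em m → ℝ) : Set (Em m) :=
  ⋂ a ∈ Ioc (0:ℝ) 1, kern (acut u a)

/-- The full cut-family of a fuzzy set, with the 0-cut being the support. -/
def cutF {m : ℕ} (u : Em m → ℝ) (a : ℝ) : Set (Em m) :=
  if a = 0 then fsupp u else acut u a

/-- Conditions (i)–(iv) of the representation theorem for `F_B(ℝ^m)^p`. -/
def GoodFamily {m : ℕ} (p : ℝ) (v : ℝ → Set (Em m)) : Prop :=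
  (∀ l ∈ Ioc (0:ℝ) 1, (v l).Nonempty ∧ IsCompact (v l)) ∧
  (∀ l ∈ Ioc (0:ℝ) 1, v l = ⋂ g ∈ Ico (0:ℝ) l, v g) ∧
  (v 0 = closure (⋃ g ∈ Ioc (0:ℝ) 1, v g)) ∧
  IntegrableOn (fun a => hausdorffDist (v a) ({0} : Set (Em m)) ^ p) (Ioc (0:ℝ) 1)


lemma acut_anti {m : ℕ} (u : Em m → ℝ) {a b : ℝ} (h : a ≤ b) : acut u b ⊆ acut u a :=
  fun _ hx => le_trans h hx

lemma acut_nonempty {m : ℕ} {p : ℝ} {u : Em m → ℝ} (hu : IsFuzzyBp p u) {a : ℝ}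
    (ha : a ≤ 1) : (acut u a).Nonempty := by
  obtain ⟨x, hx⟩ := hu.normal
  exact ⟨x, by simp [acut, hx, ha]⟩

lemma acut_univ {m : ℕ} {p : ℝ} {u : Em m → ℝ} (hu : IsFuzzyBp p u) {a : ℝ}
    (ha : a ≤ 0) : acut u a = univ :=
  eq_univ_of_forall fun x => le_trans ha (hu.mem01 x).1

lemma acut_empty {m : ℕ} {p : ℝ} {u : Em m → ℝ} (hu : IsFuzzyBp p u) {a : ℝ}
    (ha : 1 < a) : acut u a = ∅ :=
  eq_empty_of_forall_notMem fun x hx => absurd (le_trans hx (hu.mem01 x).2) (not_le.mpr ha)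

lemma acut_iInter {m : ℕ} {p : ℝ} {u : Em m → ℝ} (hu : IsFuzzyBp p u) {a : ℝ} (ha : 0 < a) :
    ⋂ b : Ioo (0:ℝ) a, acut u b = acut u a := by
  apply Subset.antisymm
  · intro x hx
    by_contra hxa
    have hux : u x < a := not_le.mp hxa
    have h0 : (0:ℝ) ≤ u x := (hu.mem01 x).1
    have hmem : ((u x + a)/2) ∈ Ioo (0:ℝ) a := ⟨by linarith, by linarith⟩
    have := mem_iInter.mp hx ⟨_, hmem⟩
    simp only [acut, mem_setOf_eq] at this
    linarith
  · exact subset_iInter fun b => acut_anti u (le_of_lt b.2.2)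

/-- Key compactness step: cuts of a fuzzy set converge from the left in Hausdorff distance. -/
lemma exists_cut_subset_thickening {m : ℕ} {p : ℝ} {u : Em m → ℝ} (hu : IsFuzzyBp p u)
    {a : ℝ} (ha : a ∈ Ioc (0:ℝ) 1) {ε : ℝ} (hε : 0 < ε) :
    ∃ b ∈ Ioo (0:ℝ) a, acut u b ⊆ thickening ε (acut u a) := by
  by_contra h
  push_neg at h
  set Z : Ioo (0:ℝ) a → Set (Em m) := fun b => acut u b \ thickening ε (acut u a) with hZ
  have hι : Nonempty (Ioo (0:ℝ) a) := ⟨⟨a/2, by constructor <;> [linarith [ha.1]; linarith [ha.1]]⟩⟩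
  have hcut_cpt : ∀ b : Ioo (0:ℝ) a, IsCompact (acut u (b:ℝ)) :=
    fun b => hu.compactCuts b ⟨b.2.1, le_trans (le_of_lt b.2.2) ha.2⟩
  have hZcpt : ∀ b, IsCompact (Z b) := fun b =>
    (hcut_cpt b).inter_right (isOpen_thickening).isClosed_compl
  have hZcl : ∀ b, IsClosed (Z b) := fun b => (hZcpt b).isClosed
  have hZne : ∀ b, (Z b).Nonempty := by
    intro b
    rcases not_subset.mp (h b b.2) with ⟨x, hx1, hx2⟩
    exact ⟨x, hx1, hx2⟩
  have hdir : Directed (· ⊇ ·) Z := by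
    intro b c
    rcases le_total (b:ℝ) c with hbc | hbc
    · exact ⟨c, fun x hx => ⟨acut_anti u hbc hx.1, hx.2⟩, fun x hx => hx⟩
    · exact ⟨b, fun x hx => hx, fun x hx => ⟨acut_anti u hbc hx.1, hx.2⟩⟩
  have := IsCompact.nonempty_iInter_of_directed_nonempty_isCompact_isClosed Z hdir hZne hZcpt hZcl
  rcases this with ⟨x, hx⟩
  have hx' : x ∈ ⋂ b : Ioo (0:ℝ) a, acut u (b:ℝ) :=
    mem_iInter.mpr fun b => (mem_iInter.mp hx b).1
  rw [acut_iInter hu ha.1] at hx'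
  have hxt : x ∈ thickening ε (acut u a) := self_subset_thickening hε _ hx'
  exact (mem_iInter.mp hx (Classical.arbitrary _)).2 hxt

lemma hd_ne_top {m : ℕ} {s t : Set (Em m)} (hs : s.Nonempty) (ht : t.Nonempty)
    (hbs : Bornology.IsBounded s) (hbt : Bornology.IsBounded t) :
    EMetric.hausdorffEdist s t ≠ ⊤ :=
  Metric.hausdorffEdist_ne_top_of_nonempty_of_bounded hs ht hbs hbt

/-- Left-continuity of β ↦ H(acut u β, acut u a) at every a. -/
lemma cut_left_tendsto {m : ℕ} {p : ℝ} {u : Em m → ℝ} (hu : IsFuzzyBp p u) (a : ℝ) :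
    Tendsto (fun b => hausdorffDist (acut u b) (acut u a)) (nhdsWithin a (Iio a)) (nhds 0) := by
  rcases le_or_gt a 0 with ha | ha
  · have : ∀ b ∈ Iio a, hausdorffDist (acut u b) (acut u a) = 0 := by
      intro b hb
      rw [acut_univ hu (le_of_lt (lt_of_lt_of_le hb ha)), acut_univ hu ha,
        Metric.hausdorffDist_self_zero]
    refine Tendsto.congr' ?_ tendsto_const_nhds
    filter_upwards [self_mem_nhdsWithin] with b hb using (this b hb).symm
  rcases le_or_gt a 1 with ha1 | ha1
  · -- main case : a ∈ (0,1]
    rw [Metric.tendsto_nhds]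
    intro ε hε
    obtain ⟨b₀, hb₀, hsub⟩ := exists_cut_subset_thickening hu ⟨ha, ha1⟩ (half_pos hε)
    filter_upwards [Ioo_mem_nhdsLT_of_mem (⟨hb₀.2, le_refl a⟩ : a ∈ Ioc b₀ a)] with b hb
    have hba : b < a := hb.2
    have hsub' : acut u b ⊆ thickening (ε/2) (acut u a) :=
      subset_trans (acut_anti u (le_of_lt hb.1)) hsub
    have hne : (acut u a).Nonempty := acut_nonempty hu ha1
    have hH : hausdorffDist (acut u b) (acut u a) ≤ ε/2 := by
      apply Metric.hausdorffDist_le_of_infDist (le_of_lt (half_pos hε))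
      · intro x hx
        exact le_of_lt ((Metric.mem_thickening_iff_infDist_lt hne).mp (hsub' hx))
      · intro y hy
        rw [Metric.infDist_zero_of_mem (acut_anti u (le_of_lt hba) hy)]
        exact le_of_lt (half_pos hε)
    rw [Real.dist_eq, sub_zero, abs_of_nonneg Metric.hausdorffDist_nonneg]
    linarith
  · -- a > 1 : cuts empty near a
    have : ∀ b ∈ Ioo 1 a, hausdorffDist (acut u b) (acut u a) = 0 := by
      intro b hb
      rw [acut_empty hu hb.1, Metric.hausdorffDist_empty']
    refine Tendsto.congr' ?_ tendsto_const_nhds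
    filter_upwards [Ioo_mem_nhdsLT_of_mem (⟨ha1, le_refl a⟩ : a ∈ Ioc 1 a)] with b hb
      using (this b hb).symm

/-- Left-continuity of a ↦ H(acut u a, acut v a). -/
lemma hd_cut_left_tendsto {m : ℕ} {p : ℝ} {u v : Em m → ℝ} (hu : IsFuzzyBp p u)
    (hv : IsFuzzyBp p v) (a : ℝ) :
    Tendsto (fun b => hausdorffDist (acut u b) (acut v b)) (nhdsWithin a (Iio a))
      (nhds (hausdorffDist (acut u a) (acut v a))) := by
  set f : ℝ → ℝ := fun b => hausdorffDist (acut u b) (acut v b) with hf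
  rcases le_or_gt a 0 with ha | ha
  · refine Tendsto.congr' ?_ tendsto_const_nhds
    filter_upwards [self_mem_nhdsWithin] with b hb
    simp only [hf, acut_univ hu (le_of_lt (lt_of_lt_of_le hb ha)), acut_univ hu ha,
      acut_univ hv (le_of_lt (lt_of_lt_of_le hb ha)), acut_univ hv ha]
  rcases le_or_gt a 1 with ha1 | ha1
  · -- squeeze: dist (f b) (f a) ≤ H(Su b, Su a) + H(Sv b, Sv a)
    have key : ∀ b ∈ Ioo (0:ℝ) a, dist (f b) (f a) ≤
        hausdorffDist (acut u b) (acut u a) + hausdorffDist (acut v b) (acut v a) := by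
      intro b hb
      have hb1 : b ≤ 1 := le_trans (le_of_lt hb.2) ha1
      have cub : IsCompact (acut u b) := hu.compactCuts b ⟨hb.1, hb1⟩
      have cua : IsCompact (acut u a) := hu.compactCuts a ⟨ha, ha1⟩
      have cvb : IsCompact (acut v b) := hv.compactCuts b ⟨hb.1, hb1⟩
      have cva : IsCompact (acut v a) := hv.compactCuts a ⟨ha, ha1⟩
      have nub : (acut u b).Nonempty := acut_nonempty hu hb1
      have nua : (acut u a).Nonempty := acut_nonempty hu ha1
      have nvb : (acut v b).Nonempty := acut_nonempty hv hb1
      have nva : (acut v a).Nonempty := acut_nonempty hv ha1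
      have t1 : EMetric.hausdorffEdist (acut u b) (acut u a) ≠ ⊤ :=
        hd_ne_top nub nua cub.isBounded cua.isBounded
      have t2 : EMetric.hausdorffEdist (acut u a) (acut v a) ≠ ⊤ :=
        hd_ne_top nua nva cua.isBounded cva.isBounded
      have t3 : EMetric.hausdorffEdist (acut v a) (acut v b) ≠ ⊤ :=
        hd_ne_top nva nvb cva.isBounded cvb.isBounded
      have t4 : EMetric.hausdorffEdist (acut u b) (acut v b) ≠ ⊤ :=
        hd_ne_top nub nvb cub.isBounded cvb.isBounded
      have h1 : f b ≤ hausdorffDist (acut u b) (acut u a) + f a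
          + hausdorffDist (acut v b) (acut v a) := by
        calc f b ≤ hausdorffDist (acut u b) (acut u a)
              + hausdorffDist (acut u a) (acut v b) :=
            Metric.hausdorffDist_triangle t1
          _ ≤ hausdorffDist (acut u b) (acut u a) +
              (hausdorffDist (acut u a) (acut v a) + hausdorffDist (acut v a) (acut v b)) := by
            gcongr
            exact Metric.hausdorffDist_triangle t2
          _ = _ := by
            rw [hf, Metric.hausdorffDist_comm (s := acut v a) (t := acut v b)]; ring_nf
      have h2 : f a ≤ hausdorffDist (acut u b) (acut u a) + f b
          + hausdorffDist (acut v b) (acut v a) := by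
        calc f a ≤ hausdorffDist (acut u a) (acut u b)
              + hausdorffDist (acut u b) (acut v a) :=
            Metric.hausdorffDist_triangle (by rw [Metric.hausdorffEDist_comm]; exact t1)
          _ ≤ hausdorffDist (acut u a) (acut u b) +
              (hausdorffDist (acut u b) (acut v b) + hausdorffDist (acut v b) (acut v a)) := by
            gcongr
            exact Metric.hausdorffDist_triangle t4
          _ = _ := by
            rw [hf, Metric.hausdorffDist_comm (s := acut u a) (t := acut u b)]; ring_nf
      rw [Real.dist_eq, abs_sub_le_iff]
      constructor <;> linarith
    have hr : Tendsto (fun b => hausdorffDist (acut u b) (acut u a)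
        + hausdorffDist (acut v b) (acut v a)) (nhdsWithin a (Iio a)) (nhds 0) := by
      simpa using (cut_left_tendsto hu a).add (cut_left_tendsto hv a)
    rw [tendsto_iff_dist_tendsto_zero]
    apply squeeze_zero' ?_ ?_ hr
    · filter_upwards with b using dist_nonneg
    · filter_upwards [Ioo_mem_nhdsLT_of_mem (⟨ha, le_refl a⟩ : a ∈ Ioc 0 a)] with b hb
        using key b hb
  · refine Tendsto.congr' ?_ tendsto_const_nhds
    filter_upwards [Ioo_mem_nhdsLT_of_mem (⟨ha1, le_refl a⟩ : a ∈ Ioc 1 a)] with b hb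
    simp only [hf, acut_empty hu hb.1, acut_empty hu ha1, acut_empty hv hb.1, acut_empty hv ha1]

/-- The left-grid approximation. -/
def grid (n : ℕ) (a : ℝ) : ℝ := ((⌈a * (n+1)⌉ : ℝ) - 1) / (n+1)

lemma grid_lt (n : ℕ) (a : ℝ) : grid n a < a := by
  have hn : (0:ℝ) < (n:ℝ)+1 := by positivity
  rw [grid, div_lt_iff₀ hn]
  have := Int.ceil_lt_add_one (a * ((n:ℝ)+1))
  push_cast at this ⊢
  linarith

lemma grid_ge (n : ℕ) (a : ℝ) : a - 1/(n+1) ≤ grid n a := by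
  have hn : (0:ℝ) < (n:ℝ)+1 := by positivity
  rw [grid, le_div_iff₀ hn]
  have := Int.le_ceil (a * ((n:ℝ)+1))
  push_cast at this ⊢
  rw [sub_mul, div_mul_cancel₀ _ (ne_of_gt hn)]
  linarith

lemma grid_tendsto (a : ℝ) : Tendsto (fun n => grid n a) atTop (nhdsWithin a (Iio a)) := by
  apply tendsto_nhdsWithin_of_tendsto_nhds_of_eventually_within
  · have h1 : Tendsto (fun n : ℕ => a - 1/((n:ℝ)+1)) atTop (nhds a) := by
      have := tendsto_one_div_add_atTop_nhds_zero_nat (𝕜 := ℝ)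
      have := (tendsto_const_nhds (x := a) (f := atTop (α := ℕ))).sub this
      simpa using this
    exact tendsto_of_tendsto_of_tendsto_of_le_of_le h1 tendsto_const_nhds
      (fun n => grid_ge n a) (fun n => le_of_lt (grid_lt n a))
  · filter_upwards with n using grid_lt n a

lemma grid_comp_measurable {f : ℝ → ℝ} (n : ℕ) : Measurable (fun a => f (grid n a)) := by
  have h1 : Measurable (fun a : ℝ => (⌈a * ((n:ℝ)+1)⌉ : ℤ)) :=
    Int.measurable_ceil.comp (measurable_id.mul_const _)
  have h2 : Measurable (fun k : ℤ => f (((k:ℝ) - 1) / ((n:ℝ)+1))) := measurable_from_top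
  exact h2.comp h1

/-- Measurability of a ↦ H(acut u a, acut v a). -/
lemma hd_cut_measurable {m : ℕ} {p : ℝ} {u v : Em m → ℝ} (hu : IsFuzzyBp p u)
    (hv : IsFuzzyBp p v) :
    Measurable (fun a => hausdorffDist (acut u a) (acut v a)) := by
  set f : ℝ → ℝ := fun a => hausdorffDist (acut u a) (acut v a) with hf
  apply measurable_of_tendsto_metrizable' (f := fun n a => f (grid n a)) atTop
  · intro n; exact grid_comp_measurable n
  · rw [tendsto_pi_nhds]
    intro a
    exact (hd_cut_left_tendsto hu hv a).comp (grid_tendsto a)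

lemma hd_origin_mono {m : ℕ} {A B : Set (Em m)} (hAB : A ⊆ B) (hA : A.Nonempty)
    (hB : Bornology.IsBounded B) :
    hausdorffDist A ({0} : Set (Em m)) ≤ hausdorffDist B ({0} : Set (Em m)) := by
  have hBne : B.Nonempty := hA.mono hAB
  have htop : EMetric.hausdorffEdist B ({0} : Set (Em m)) ≠ ⊤ :=
    hd_ne_top hBne (singleton_nonempty 0) hB Bornology.isBounded_singleton
  apply Metric.hausdorffDist_le_of_infDist Metric.hausdorffDist_nonneg
  · intro x hx
    exact Metric.infDist_le_hausdorffDist_of_mem (hAB hx) htop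
  · rintro y hy
    obtain ⟨x₀, hx₀⟩ := hA
    rcases hy with rfl
    calc Metric.infDist 0 A ≤ dist 0 x₀ := Metric.infDist_le_dist_of_mem hx₀
      _ = Metric.infDist x₀ ({0} : Set (Em m)) := by
          rw [Metric.infDist_singleton, dist_comm]
      _ ≤ _ := Metric.infDist_le_hausdorffDist_of_mem (hAB hx₀) htop

lemma add_rpow_le {x y q : ℝ} (hx : 0 ≤ x) (hy : 0 ≤ y) (hq : 0 ≤ q) :
    (x + y) ^ q ≤ 2 ^ q * (x ^ q + y ^ q) := by
  have h1 : x + y ≤ 2 * max x y := by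
    rcases le_total x y with h | h
    · simp [max_eq_right h]; linarith
    · simp [max_eq_left h]; linarith
  have h2 : (x + y) ^ q ≤ (2 * max x y) ^ q :=
    Real.rpow_le_rpow (by linarith) h1 hq
  have h3 : (2 * max x y : ℝ) ^ q = 2 ^ q * (max x y) ^ q :=
    Real.mul_rpow (by norm_num) (le_max_of_le_left hx)
  have h4 : (max x y) ^ q ≤ x ^ q + y ^ q := by
    rcases le_total x y with h | h
    · rw [max_eq_right h]
      nlinarith [Real.rpow_nonneg hx q]
    · rw [max_eq_left h]
      nlinarith [Real.rpow_nonneg hy q]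
  calc (x + y) ^ q ≤ 2 ^ q * (max x y) ^ q := by rw [← h3]; exact h2
    _ ≤ 2 ^ q * (x ^ q + y ^ q) := by
        have : (0:ℝ) ≤ 2 ^ q := Real.rpow_nonneg (by norm_num) q
        nlinarith

lemma integrable_hd_pow {m : ℕ} {p : ℝ} (hp : 1 ≤ p) {u v : Em m → ℝ} (hu : IsFuzzyBp p u)
    (hv : IsFuzzyBp p v) :
    IntegrableOn (fun a => hausdorffDist (acut u a) (acut v a) ^ p) (Ioc (0:ℝ) 1) := by
  have hp0 : (0:ℝ) ≤ p := by linarith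
  have hmeas : AEStronglyMeasurable (fun a => hausdorffDist (acut u a) (acut v a) ^ p)
      (volume.restrict (Ioc (0:ℝ) 1)) :=
    (((Real.continuous_rpow_const hp0).measurable).comp (hd_cut_measurable hu hv)).aestronglyMeasurable
  have hdom : Integrable (fun a => 2 ^ p * (hausdorffDist (acut u a) ({0} : Set (Em m)) ^ p
      + hausdorffDist (acut v a) ({0} : Set (Em m)) ^ p))
      (volume.restrict (Ioc (0:ℝ) 1)) :=
    (hu.lp.add hv.lp).const_mul _
  refine hdom.mono hmeas ?_
  rw [ae_restrict_iff' measurableSet_Ioc]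
  filter_upwards with a ha
  have h1 : (0:ℝ) ≤ hausdorffDist (acut u a) (acut v a) := Metric.hausdorffDist_nonneg
  have hb : hausdorffDist (acut u a) (acut v a) ≤
      hausdorffDist (acut u a) ({0} : Set (Em m)) +
      hausdorffDist (acut v a) ({0} : Set (Em m)) := by
    have cu : IsCompact (acut u a) := hu.compactCuts a ha
    have cv : IsCompact (acut v a) := hv.compactCuts a ha
    have nu : (acut u a).Nonempty := acut_nonempty hu ha.2
    have nv : (acut v a).Nonempty := acut_nonempty hv ha.2
    have t1 : EMetric.hausdorffEdist (acut u a) ({0} : Set (Em m)) ≠ ⊤ :=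
      hd_ne_top nu (singleton_nonempty 0) cu.isBounded Bornology.isBounded_singleton
    calc hausdorffDist (acut u a) (acut v a) ≤
        hausdorffDist (acut u a) ({0} : Set (Em m)) +
        hausdorffDist ({0} : Set (Em m)) (acut v a) := Metric.hausdorffDist_triangle t1
      _ = _ := by rw [Metric.hausdorffDist_comm (s := ({0} : Set (Em m)))]
  rw [Real.norm_eq_abs, Real.norm_eq_abs, abs_of_nonneg (Real.rpow_nonneg h1 p),
    abs_of_nonneg]
  · calc hausdorffDist (acut u a) (acut v a) ^ p ≤
        (hausdorffDist (acut u a) ({0} : Set (Em m)) +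
         hausdorffDist (acut v a) ({0} : Set (Em m))) ^ p :=
        Real.rpow_le_rpow h1 hb hp0
      _ ≤ _ := add_rpow_le Metric.hausdorffDist_nonneg Metric.hausdorffDist_nonneg hp0
  · exact mul_nonneg (Real.rpow_nonneg (by norm_num) p)
      (add_nonneg (Real.rpow_nonneg Metric.hausdorffDist_nonneg p)
        (Real.rpow_nonneg Metric.hausdorffDist_nonneg p))

/-- A `d_p`-bounded subset of `F_B(ℝ^m)^p` has uniformly bounded
α-cuts for each α > 0. -/
theorem bounded_imp_cuts_uniformly_bounded {m : ℕ} (p : ℝ) (hp : 1 ≤ p)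
    (U : Set (Em m → ℝ)) (hU : ∀ u ∈ U, IsFuzzyBp p u)
    (hb : ∃ M : ℝ, ∀ u ∈ U, ∀ v ∈ U, dp p u v ≤ M) :
    ∀ a : ℝ, 0 < a →
      ∃ M : ℝ, ∀ u ∈ U, hausdorffDist (acut u a) ({0} : Set (Em m)) ≤ M := by
  obtain ⟨M, hM⟩ := hb
  intro a ha
  rcases eq_empty_or_nonempty U with rfl | ⟨u₀, hu₀⟩
  · exact ⟨0, by simp⟩
  by_cases ha1 : a ≤ 1
  case neg =>
    refine ⟨0, fun u hu => ?_⟩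
    rw [acut_empty (hU u hu) (not_le.mp ha1), Metric.hausdorffDist_empty']
  case pos =>
  have hp0 : (0:ℝ) < p := lt_of_lt_of_le one_pos hp
  have hpne : p ≠ 0 := ne_of_gt hp0
  have hp0' : (0:ℝ) ≤ p := le_of_lt hp0
  have hUu₀ := hU u₀ hu₀
  set g0p : ℝ → ℝ := fun α => hausdorffDist (acut u₀ α) ({0} : Set (Em m)) ^ p with hg0p
  set K := ∫ α in Ioc (0:ℝ) 1, g0p α with hKdef
  have hK0 : 0 ≤ K :=
    setIntegral_nonneg measurableSet_Ioc
      (fun α _ => Real.rpow_nonneg Metric.hausdorffDist_nonneg p)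
  set Mp := max M 0 with hMp
  have hMp0 : (0:ℝ) ≤ Mp := le_max_right M 0
  refine ⟨((2 ^ p * (Mp ^ p + K)) / a) ^ (1/p), fun u hu => ?_⟩
  have hUu := hU u hu
  set D := hausdorffDist (acut u a) ({0} : Set (Em m)) with hD
  have hD0 : 0 ≤ D := Metric.hausdorffDist_nonneg
  set f : ℝ → ℝ := fun α => hausdorffDist (acut u α) (acut u₀ α) with hfdef
  have key : ∀ α ∈ Ioc (0:ℝ) a, D ^ p ≤ 2 ^ p * (f α ^ p + g0p α) := by
    intro α hα
    have hα1 : α ≤ 1 := le_trans hα.2 ha1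
    have cu : IsCompact (acut u α) := hUu.compactCuts α ⟨hα.1, hα1⟩
    have cv : IsCompact (acut u₀ α) := hUu₀.compactCuts α ⟨hα.1, hα1⟩
    have nu : (acut u α).Nonempty := acut_nonempty hUu hα1
    have nv : (acut u₀ α).Nonempty := acut_nonempty hUu₀ hα1
    have step1 : D ≤ hausdorffDist (acut u α) ({0} : Set (Em m)) :=
      hd_origin_mono (acut_anti u hα.2) (acut_nonempty hUu ha1) cu.isBounded
    have t1 : EMetric.hausdorffEdist (acut u α) (acut u₀ α) ≠ ⊤ :=
      hd_ne_top nu nv cu.isBounded cv.isBounded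
    have step2 : hausdorffDist (acut u α) ({0} : Set (Em m)) ≤
        f α + hausdorffDist (acut u₀ α) ({0} : Set (Em m)) :=
      Metric.hausdorffDist_triangle t1
    have hDb : D ≤ f α + hausdorffDist (acut u₀ α) ({0} : Set (Em m)) :=
      le_trans step1 step2
    calc D ^ p ≤ (f α + hausdorffDist (acut u₀ α) ({0} : Set (Em m))) ^ p :=
        Real.rpow_le_rpow hD0 hDb hp0'
      _ ≤ 2 ^ p * (f α ^ p + g0p α) :=
        add_rpow_le Metric.hausdorffDist_nonneg Metric.hausdorffDist_nonneg hp0'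
  have hsub : Ioc (0:ℝ) a ⊆ Ioc (0:ℝ) 1 := Ioc_subset_Ioc_right ha1
  have hfint : IntegrableOn (fun α => f α ^ p) (Ioc (0:ℝ) 1) :=
    integrable_hd_pow hp hUu hUu₀
  have hfint' : IntegrableOn (fun α => f α ^ p) (Ioc (0:ℝ) a) := hfint.mono_set hsub
  have hg0int' : IntegrableOn g0p (Ioc (0:ℝ) a) := hUu₀.lp.mono_set hsub
  have hint : IntegrableOn (fun α => 2 ^ p * (f α ^ p + g0p α)) (Ioc (0:ℝ) a) :=
    (hfint'.add hg0int').const_mul _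
  have hvol : (volume (Ioc (0:ℝ) a)).toReal = a := by
    rw [Real.volume_Ioc, sub_zero, ENNReal.toReal_ofReal (le_of_lt ha)]
  have hconst : IntegrableOn (fun _ : ℝ => D ^ p) (Ioc (0:ℝ) a) :=
    integrableOn_const (by rw [Real.volume_Ioc]; exact ENNReal.ofReal_ne_top)
  have h1 : ∫ _ in Ioc (0:ℝ) a, D ^ p ≤ ∫ α in Ioc (0:ℝ) a, 2 ^ p * (f α ^ p + g0p α) :=
    setIntegral_mono_on hconst hint measurableSet_Ioc key
  have h2 : ∫ _ in Ioc (0:ℝ) a, D ^ p = a * D ^ p := by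
    rw [setIntegral_const, measureReal_def, hvol, smul_eq_mul]
  have hfnn : 0 ≤ᵐ[volume.restrict (Ioc (0:ℝ) 1)] fun α => f α ^ p :=
    Filter.Eventually.of_forall fun α => Real.rpow_nonneg Metric.hausdorffDist_nonneg p
  have hg0nn : 0 ≤ᵐ[volume.restrict (Ioc (0:ℝ) 1)] g0p :=
    Filter.Eventually.of_forall fun α => Real.rpow_nonneg Metric.hausdorffDist_nonneg p
  have hIf : ∫ α in Ioc (0:ℝ) a, f α ^ p ≤ ∫ α in Ioc (0:ℝ) 1, f α ^ p :=
    setIntegral_mono_set hfint hfnn hsub.eventuallyLE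
  have hIg : ∫ α in Ioc (0:ℝ) a, g0p α ≤ K :=
    setIntegral_mono_set hUu₀.lp hg0nn hsub.eventuallyLE
  have hI0 : 0 ≤ ∫ α in Ioc (0:ℝ) 1, f α ^ p :=
    setIntegral_nonneg measurableSet_Ioc
      (fun α _ => Real.rpow_nonneg Metric.hausdorffDist_nonneg p)
  have hdpM : dp p u u₀ ≤ Mp := le_trans (hM u hu u₀ hu₀) (le_max_left M 0)
  have hIM : ∫ α in Ioc (0:ℝ) 1, f α ^ p ≤ Mp ^ p := by
    have heq : (∫ α in Ioc (0:ℝ) 1, f α ^ p) = dp p u u₀ ^ p := by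
      rw [dp, one_div, Real.rpow_inv_rpow hI0 hpne]
    rw [heq]
    exact Real.rpow_le_rpow (Real.rpow_nonneg hI0 _) hdpM hp0'
  have h3 : ∫ α in Ioc (0:ℝ) a, 2 ^ p * (f α ^ p + g0p α) ≤ 2 ^ p * (Mp ^ p + K) := by
    rw [integral_const_mul, integral_add hfint' hg0int']
    have h2p : (0:ℝ) ≤ 2 ^ p := Real.rpow_nonneg (by norm_num) p
    have := add_le_add (le_trans hIf hIM) hIg
    nlinarith
  have hstep : a * D ^ p ≤ 2 ^ p * (Mp ^ p + K) := by
    rw [← h2]; exact le_trans h1 h3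
  have hDp : D ^ p ≤ (2 ^ p * (Mp ^ p + K)) / a := by
    rw [le_div_iff₀ ha]; linarith
  calc D = (D ^ p) ^ (1/p) := by rw [one_div, Real.rpow_rpow_inv hD0 hpne]
    _ ≤ ((2 ^ p * (Mp ^ p + K)) / a) ^ (1/p) :=
      Real.rpow_le_rpow (Real.rpow_nonneg hD0 p) hDp (by positivity)


end
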